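/- Suppose H(Y|X)=0, I(Y;N)=0, H(X|Y,N)=0. If a representation Z' satisfies sufficiency I(Z';Y)=I(X;Y) and invariance to the nuisance I(Z';N)=0, and Z' is obtained through a Markov chain (Y,N) → X → Z', then Z' is 0-minimal (i.e., minimal) sufficient: I(Z';X) ≤ I(Z̃;X) for every sufficient representation Z̃ with (Y,N) → X → Z̃ Markov. -/
import Mathlib


open Real

noncomputable def mass {Ω α : Type*} [Fintype Ω] [DecidableEq α]
    (p : Ω → ℝ) (X : Ω → α) (x : α) : ℝ :=
  ∑ ω, if X ω = x then p ω else 0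

noncomputable def ent {Ω α : Type*} [Fintype Ω] [Fintype α] [DecidableEq α]
    (p : Ω → ℝ) (X : Ω → α) : ℝ :=
  ∑ x, Real.negMulLog (mass p X x)

noncomputable def condEnt {Ω α β : Type*} [Fintype Ω] [Fintype α] [Fintype β]
    [DecidableEq α] [DecidableEq β] (p : Ω → ℝ) (X : Ω → α) (Y : Ω → β) : ℝ :=
  ent p (fun ω => (X ω, Y ω)) - ent p Y

noncomputable def mi {Ω α β : Type*} [Fintype Ω] [Fintype α] [Fintype β]
    [DecidableEq α] [DecidableEq β] (p : Ω → ℝ) (X : Ω → α) (Y : Ω → β) : ℝ :=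
  ent p X + ent p Y - ent p (fun ω => (X ω, Y ω))

noncomputable def cmi {Ω α β γ : Type*} [Fintype Ω] [Fintype α] [Fintype β] [Fintype γ]
    [DecidableEq α] [DecidableEq β] [DecidableEq γ]
    (p : Ω → ℝ) (A : Ω → α) (B : Ω → β) (C : Ω → γ) : ℝ :=
  condEnt p A C - condEnt p A (fun ω => (B ω, C ω))

/-! ### Auxiliary lemmas -/

lemma negMulLog_add_le' {x y : ℝ} (hx : 0 ≤ x) (hy : 0 ≤ y) :
    Real.negMulLog (x + y) ≤ Real.negMulLog x + Real.negMulLog y := by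
  rcases eq_or_lt_of_le hx with h | hx'
  · simp [← h]
  rcases eq_or_lt_of_le hy with h | hy'
  · simp [← h]
  have h1 : Real.log x ≤ Real.log (x + y) := Real.log_le_log hx' (by linarith)
  have h2 : Real.log y ≤ Real.log (x + y) := Real.log_le_log hy' (by linarith)
  simp only [Real.negMulLog]
  nlinarith [mul_le_mul_of_nonneg_left h1 hx, mul_le_mul_of_nonneg_left h2 hy]

lemma negMulLog_sum_le' {ι : Type*} [DecidableEq ι] (s : Finset ι) (f : ι → ℝ)
    (hf : ∀ i ∈ s, 0 ≤ f i) :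
    Real.negMulLog (∑ i ∈ s, f i) ≤ ∑ i ∈ s, Real.negMulLog (f i) := by
  induction s using Finset.induction_on with
  | empty => simp
  | @insert a s' hnot ih =>
    rw [Finset.sum_insert hnot, Finset.sum_insert hnot]
    calc Real.negMulLog (f a + ∑ i ∈ s', f i)
        ≤ Real.negMulLog (f a) + Real.negMulLog (∑ i ∈ s', f i) :=
          negMulLog_add_le' (hf a (Finset.mem_insert_self a s'))
            (Finset.sum_nonneg fun i hi => hf i (Finset.mem_insert_of_mem hi))
      _ ≤ _ := by
          have := ih (fun i hi => hf i (Finset.mem_insert_of_mem hi))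
          linarith

section aux
variable {Ω : Type*} [Fintype Ω] (p : Ω → ℝ)

lemma mass_nonneg' {α : Type*} [DecidableEq α] (hp : ∀ ω, 0 ≤ p ω) (X : Ω → α) (x : α) :
    0 ≤ mass p X x :=
  Finset.sum_nonneg fun ω _ => by split <;> simp [hp ω]

lemma mass_pair_fst' {α β : Type*} [Fintype β] [DecidableEq α] [DecidableEq β]
    (f : Ω → α) (g : Ω → β) (a : α) :
    mass p f a = ∑ b, mass p (fun ω => (f ω, g ω)) (a, b) := by
  unfold mass
  rw [Finset.sum_comm]
  refine Finset.sum_congr rfl fun ω _ => ?_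
  simp [Prod.ext_iff, ite_and, Finset.sum_ite_eq]

lemma mass_pair_snd' {α β : Type*} [Fintype α] [DecidableEq α] [DecidableEq β]
    (f : Ω → α) (g : Ω → β) (b : β) :
    mass p g b = ∑ a, mass p (fun ω => (f ω, g ω)) (a, b) := by
  unfold mass
  rw [Finset.sum_comm]
  refine Finset.sum_congr rfl fun ω _ => ?_
  simp [Prod.ext_iff, ite_and, Finset.sum_ite_eq]

lemma mass_triple_mid' {α β γ : Type*} [Fintype β] [DecidableEq α] [DecidableEq β] [DecidableEq γ]
    (A : Ω → α) (B : Ω → β) (C : Ω → γ) (a : α) (c : γ) :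
    mass p (fun ω => (A ω, C ω)) (a, c) = ∑ b, mass p (fun ω => (A ω, B ω, C ω)) (a, b, c) := by
  unfold mass
  rw [Finset.sum_comm]
  refine Finset.sum_congr rfl fun ω _ => ?_
  simp [Prod.ext_iff, ite_and, Finset.sum_ite_eq]

lemma ent_comp_inj' {α β : Type*} [Fintype α] [Fintype β] [DecidableEq α] [DecidableEq β]
    {g : α → β} (hg : Function.Injective g) (X : Ω → α) :
    ent p (fun ω => g (X ω)) = ent p X := by
  unfold ent
  have h1 : ∀ x : α, mass p (fun ω => g (X ω)) (g x) = mass p X x := by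
    intro x; simp [mass, hg.eq_iff]
  calc ∑ y : β, Real.negMulLog (mass p (fun ω => g (X ω)) y)
      = ∑ y ∈ Finset.image g Finset.univ, Real.negMulLog (mass p (fun ω => g (X ω)) y) := by
        refine (Finset.sum_subset (Finset.subset_univ _) ?_).symm
        intro y _ hy
        simp only [Finset.mem_image, Finset.mem_univ, true_and] at hy
        have : mass p (fun ω => g (X ω)) y = 0 := by
          refine Finset.sum_eq_zero fun ω _ => ?_
          have : g (X ω) ≠ y := fun h => hy ⟨X ω, h⟩
          simp [this]
        simp [this]
    _ = ∑ x : α, Real.negMulLog (mass p (fun ω => g (X ω)) (g x)) :=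
        Finset.sum_image fun x _ y _ h => hg h
    _ = ∑ x : α, Real.negMulLog (mass p X x) := by simp [h1]

lemma ent_swap' {α β : Type*} [Fintype α] [Fintype β] [DecidableEq α] [DecidableEq β]
    (X : Ω → α) (Y : Ω → β) :
    ent p (fun ω => (X ω, Y ω)) = ent p (fun ω => (Y ω, X ω)) := by
  have hg : Function.Injective (fun z : α × β => (z.2, z.1)) := by
    intro a b h; simp only [Prod.ext_iff] at h ⊢; tauto
  have := ent_comp_inj' p hg (fun ω => (X ω, Y ω))
  simpa using this.symm

lemma ent_rot' {α β γ : Type*} [Fintype α] [Fintype β] [Fintype γ]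
    [DecidableEq α] [DecidableEq β] [DecidableEq γ]
    (A : Ω → α) (B : Ω → β) (C : Ω → γ) :
    ent p (fun ω => (A ω, B ω, C ω)) = ent p (fun ω => (B ω, A ω, C ω)) := by
  have hg : Function.Injective (fun z : α × β × γ => (z.2.1, z.1, z.2.2)) := by
    intro a b h; simp only [Prod.ext_iff] at h ⊢; tauto
  have := ent_comp_inj' p hg (fun ω => (A ω, B ω, C ω))
  simpa using this.symm

lemma ent_swap23' {α β γ : Type*} [Fintype α] [Fintype β] [Fintype γ]
    [DecidableEq α] [DecidableEq β] [DecidableEq γ]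
    (A : Ω → α) (B : Ω → β) (C : Ω → γ) :
    ent p (fun ω => (A ω, B ω, C ω)) = ent p (fun ω => (A ω, C ω, B ω)) := by
  have hg : Function.Injective (fun z : α × β × γ => (z.1, z.2.2, z.2.1)) := by
    intro a b h; simp only [Prod.ext_iff] at h ⊢; tauto
  have := ent_comp_inj' p hg (fun ω => (A ω, B ω, C ω))
  simpa using this.symm

lemma condEnt_nonneg' {α β : Type*} [Fintype α] [Fintype β] [DecidableEq α] [DecidableEq β]
    (hp : ∀ ω, 0 ≤ p ω) (A : Ω → α) (B : Ω → β) :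
    0 ≤ condEnt p A B := by
  unfold condEnt
  have h : ent p B ≤ ent p (fun ω => (A ω, B ω)) := by
    unfold ent
    rw [Fintype.sum_prod_type, Finset.sum_comm]
    refine Finset.sum_le_sum fun b _ => ?_
    rw [mass_pair_snd' p A B b]
    exact negMulLog_sum_le' _ _ (fun a _ => mass_nonneg' p hp _ _)
  linarith

lemma cmi_symm' {α β γ : Type*} [Fintype α] [Fintype β] [Fintype γ]
    [DecidableEq α] [DecidableEq β] [DecidableEq γ]
    (A : Ω → α) (B : Ω → β) (C : Ω → γ) :
    cmi p A B C = cmi p B A C := by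
  simp only [cmi, condEnt]
  rw [ent_rot' p A B C]
  ring

lemma cmi_le_condEnt' {α β γ : Type*} [Fintype α] [Fintype β] [Fintype γ]
    [DecidableEq α] [DecidableEq β] [DecidableEq γ]
    (hp : ∀ ω, 0 ≤ p ω) (A : Ω → α) (B : Ω → β) (C : Ω → γ) :
    cmi p A B C ≤ condEnt p A C := by
  have := condEnt_nonneg' p hp A (fun ω => (B ω, C ω))
  simp only [cmi]
  linarith

lemma mi_chain' {α β γ : Type*} [Fintype α] [Fintype β] [Fintype γ]
    [DecidableEq α] [DecidableEq β] [DecidableEq γ]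
    (A : Ω → α) (B : Ω → β) (C : Ω → γ) :
    mi p A (fun ω => (B ω, C ω)) = mi p A C + cmi p A B C := by
  simp only [mi, cmi, condEnt]
  ring

lemma mi_swap_right' {α β γ : Type*} [Fintype α] [Fintype β] [Fintype γ]
    [DecidableEq α] [DecidableEq β] [DecidableEq γ]
    (A : Ω → α) (B : Ω → β) (C : Ω → γ) :
    mi p A (fun ω => (B ω, C ω)) = mi p A (fun ω => (C ω, B ω)) := by
  simp only [mi]
  rw [ent_swap' p B C, ent_swap23' p A B C]

lemma sum_rot3 {M : Type*} [AddCommMonoid M] {α β γ : Type*}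
    [Fintype α] [Fintype β] [Fintype γ] (f : α → β → γ → M) :
    ∑ a, ∑ b, ∑ c, f a b c = ∑ c, ∑ b, ∑ a, f a b c := by
  calc ∑ a, ∑ b, ∑ c, f a b c
      = ∑ a, ∑ c, ∑ b, f a b c := Finset.sum_congr rfl fun a _ => Finset.sum_comm
    _ = ∑ c, ∑ a, ∑ b, f a b c := Finset.sum_comm
    _ = ∑ c, ∑ b, ∑ a, f a b c := Finset.sum_congr rfl fun c _ => Finset.sum_comm

lemma sum_cyc3 {M : Type*} [AddCommMonoid M] {α β γ : Type*}
    [Fintype α] [Fintype β] [Fintype γ] (f : α → β → γ → M) :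
    ∑ a, ∑ b, ∑ c, f a b c = ∑ b, ∑ c, ∑ a, f a b c := by
  calc ∑ a, ∑ b, ∑ c, f a b c
      = ∑ b, ∑ a, ∑ c, f a b c := Finset.sum_comm
    _ = ∑ b, ∑ c, ∑ a, f a b c := Finset.sum_congr rfl fun b _ => Finset.sum_comm

lemma cmi_nonneg' {α β γ : Type*} [Fintype α] [Fintype β] [Fintype γ]
    [DecidableEq α] [DecidableEq β] [DecidableEq γ]
    (hp : ∀ ω, 0 ≤ p ω) (A : Ω → α) (B : Ω → β) (C : Ω → γ) :
    0 ≤ cmi p A B C := by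
  classical
  set t : α → β → γ → ℝ := fun a b c => mass p (fun ω => (A ω, B ω, C ω)) (a, b, c) with ht
  set mAC : α → γ → ℝ := fun a c => mass p (fun ω => (A ω, C ω)) (a, c) with hmAC
  set mBC : β → γ → ℝ := fun b c => mass p (fun ω => (B ω, C ω)) (b, c) with hmBC
  set mC : γ → ℝ := fun c => mass p C c with hmC
  have htn : ∀ a b c, 0 ≤ t a b c := fun a b c => mass_nonneg' p hp _ _
  have hAC : ∀ a c, mAC a c = ∑ b, t a b c := fun a c => mass_triple_mid' p A B C a c
  have hBC : ∀ b c, mBC b c = ∑ a, t a b c := fun b c =>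
    mass_pair_snd' p A (fun ω => (B ω, C ω)) (b, c)
  have hCB : ∀ c, mC c = ∑ b, mBC b c := fun c => mass_pair_snd' p B C c
  have hCA : ∀ c, mC c = ∑ a, mAC a c := fun c => mass_pair_snd' p A C c
  have hCt : ∀ c, mC c = ∑ b, ∑ a, t a b c := by
    intro c
    rw [hCB c]
    exact Finset.sum_congr rfl fun b _ => hBC b c
  have hACn : ∀ a c, 0 ≤ mAC a c := fun a c => mass_nonneg' p hp _ _
  have hBCn : ∀ b c, 0 ≤ mBC b c := fun b c => mass_nonneg' p hp _ _
  have hCn : ∀ c, 0 ≤ mC c := fun c => mass_nonneg' p hp _ _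
  -- express cmi as a triple sum
  have key : cmi p A B C = ∑ a, ∑ b, ∑ c,
      (t a b c * Real.log (t a b c) + t a b c * Real.log (mC c)
        - t a b c * Real.log (mAC a c) - t a b c * Real.log (mBC b c)) := by
    have e1 : ent p (fun ω => (A ω, C ω))
        = ∑ a, ∑ b, ∑ c, (-(t a b c * Real.log (mAC a c))) := by
      unfold ent
      rw [Fintype.sum_prod_type]
      refine Finset.sum_congr rfl fun a _ => ?_
      rw [Finset.sum_comm]
      refine Finset.sum_congr rfl fun c _ => ?_
      rw [Real.negMulLog, Finset.sum_neg_distrib, ← Finset.sum_mul, ← hAC a c, neg_mul]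
    have e2 : ent p (fun ω => (B ω, C ω))
        = ∑ a, ∑ b, ∑ c, (-(t a b c * Real.log (mBC b c))) := by
      unfold ent
      rw [Fintype.sum_prod_type, sum_cyc3 (fun a b c => (-(t a b c * Real.log (mBC b c))))]
      refine Finset.sum_congr rfl fun b _ => Finset.sum_congr rfl fun c _ => ?_
      rw [Real.negMulLog, Finset.sum_neg_distrib, ← Finset.sum_mul, ← hBC b c, neg_mul]
    have e3 : ent p C = ∑ a, ∑ b, ∑ c, (-(t a b c * Real.log (mC c))) := by
      unfold ent
      rw [sum_rot3 (fun a b c => (-(t a b c * Real.log (mC c))))]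
      refine Finset.sum_congr rfl fun c _ => ?_
      show Real.negMulLog (mC c) = _
      calc Real.negMulLog (mC c) = -((∑ b, ∑ a, t a b c) * Real.log (mC c)) := by
            rw [Real.negMulLog, ← hCt c, neg_mul]
        _ = ∑ b, -((∑ a, t a b c) * Real.log (mC c)) := by
            rw [Finset.sum_neg_distrib, ← Finset.sum_mul]
        _ = ∑ b, ∑ a, -(t a b c * Real.log (mC c)) :=
            Finset.sum_congr rfl fun b _ => by
              rw [Finset.sum_neg_distrib, ← Finset.sum_mul]
    have e4 : ent p (fun ω => (A ω, B ω, C ω))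
        = ∑ a, ∑ b, ∑ c, Real.negMulLog (t a b c) := by
      unfold ent
      rw [Fintype.sum_prod_type]
      refine Finset.sum_congr rfl fun a _ => ?_
      rw [Fintype.sum_prod_type]
    have hcmi : cmi p A B C = ent p (fun ω => (A ω, C ω)) + ent p (fun ω => (B ω, C ω))
        - ent p C - ent p (fun ω => (A ω, B ω, C ω)) := by
      simp only [cmi, condEnt]
      ring
    rw [hcmi, e1, e2, e3, e4, ← Finset.sum_add_distrib, ← Finset.sum_sub_distrib,
      ← Finset.sum_sub_distrib]
    refine Finset.sum_congr rfl fun a _ => ?_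
    rw [← Finset.sum_add_distrib, ← Finset.sum_sub_distrib, ← Finset.sum_sub_distrib]
    refine Finset.sum_congr rfl fun b _ => ?_
    rw [← Finset.sum_add_distrib, ← Finset.sum_sub_distrib, ← Finset.sum_sub_distrib]
    refine Finset.sum_congr rfl fun c _ => ?_
    rw [Real.negMulLog]
    ring
  -- the comparison distribution
  set q : α → β → γ → ℝ :=
    fun a b c => if mC c = 0 then 0 else mAC a c * mBC b c / mC c with hq
  have hqn : ∀ a b c, 0 ≤ q a b c := by
    intro a b c
    rw [hq]
    dsimp only
    split
    · exact le_refl 0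
    · exact div_nonneg (mul_nonneg (hACn a c) (hBCn b c)) (hCn c)
  have hterm : ∀ a b c, t a b c - q a b c ≤
      t a b c * Real.log (t a b c) + t a b c * Real.log (mC c)
        - t a b c * Real.log (mAC a c) - t a b c * Real.log (mBC b c) := by
    intro a b c
    by_cases h0 : t a b c = 0
    · rw [h0]
      simp only [zero_mul, zero_sub, sub_zero, add_zero, zero_add]
      linarith [hqn a b c]
    · have htpos : 0 < t a b c := lt_of_le_of_ne (htn a b c) (Ne.symm h0)
      have hACpos : 0 < mAC a c := lt_of_lt_of_le htpos (by
        rw [hAC a c]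
        exact Finset.single_le_sum (fun b' _ => htn a b' c) (Finset.mem_univ b))
      have hBCpos : 0 < mBC b c := lt_of_lt_of_le htpos (by
        rw [hBC b c]
        exact Finset.single_le_sum (fun a' _ => htn a' b c) (Finset.mem_univ a))
      have hCpos : 0 < mC c := lt_of_lt_of_le hBCpos (by
        rw [hCB c]
        exact Finset.single_le_sum (fun b' _ => hBCn b' c) (Finset.mem_univ b))
      have hqe : q a b c = mAC a c * mBC b c / mC c := by
        rw [hq]; exact if_neg (ne_of_gt hCpos)
      have hqpos : 0 < q a b c := by
        rw [hqe]; exact div_pos (mul_pos hACpos hBCpos) hCpos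
      have hlogq : Real.log (q a b c)
          = Real.log (mAC a c) + Real.log (mBC b c) - Real.log (mC c) := by
        rw [hqe, Real.log_div (by positivity) (ne_of_gt hCpos),
          Real.log_mul (ne_of_gt hACpos) (ne_of_gt hBCpos)]
      have hlog := Real.log_le_sub_one_of_pos (div_pos hqpos htpos)
      rw [Real.log_div (ne_of_gt hqpos) (ne_of_gt htpos)] at hlog
      have h2 : t a b c * (Real.log (q a b c) - Real.log (t a b c))
          ≤ t a b c * (q a b c / t a b c - 1) :=
        mul_le_mul_of_nonneg_left hlog htpos.le
      have h3 : t a b c * (q a b c / t a b c - 1) = q a b c - t a b c := by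
        field_simp
      rw [h3] at h2
      have h4 : t a b c * Real.log (q a b c)
          = t a b c * Real.log (mAC a c) + t a b c * Real.log (mBC b c)
            - t a b c * Real.log (mC c) := by
        rw [hlogq]; ring
      nlinarith [h2, h4]
  have hsumq : ∑ a, ∑ b, ∑ c, q a b c = ∑ a, ∑ b, ∑ c, t a b c := by
    rw [sum_rot3 q, sum_rot3 t]
    refine Finset.sum_congr rfl fun c _ => ?_
    by_cases h0 : mC c = 0
    · have hz : ∀ b a, t a b c = 0 := by
        intro b a
        have h1 : ∑ b, ∑ a, t a b c = 0 := by rw [← hCt c]; exact h0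
        have h2 : ∀ b' ∈ Finset.univ, (0:ℝ) ≤ ∑ a, t a b' c :=
          fun b' _ => Finset.sum_nonneg fun a' _ => htn a' b' c
        have h3 := (Finset.sum_eq_zero_iff_of_nonneg h2).mp h1 b (Finset.mem_univ b)
        exact (Finset.sum_eq_zero_iff_of_nonneg
          (fun a' _ => htn a' b c)).mp h3 a (Finset.mem_univ a)
      have hq0 : ∀ b a, q a b c = 0 := by
        intro b a; rw [hq]; exact if_pos h0
      simp [hz, hq0]
    · have hqe : ∀ a b, q a b c = mAC a c * mBC b c / mC c := by
        intro a b; rw [hq]; exact if_neg h0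
      calc ∑ b, ∑ a, q a b c
          = ∑ b, ∑ a, mAC a c * mBC b c / mC c :=
            Finset.sum_congr rfl fun b _ => Finset.sum_congr rfl fun a _ => hqe a b
        _ = ∑ b, (∑ a, mAC a c) * mBC b c / mC c := by
            refine Finset.sum_congr rfl fun b _ => ?_
            rw [← Finset.sum_div, ← Finset.sum_mul]
        _ = ∑ b, mC c * mBC b c / mC c := by rw [← hCA c]
        _ = ∑ b, mBC b c := Finset.sum_congr rfl fun b _ => by
            rw [mul_comm, mul_div_assoc, div_self h0, mul_one]
        _ = ∑ b, ∑ a, t a b c := Finset.sum_congr rfl fun b _ => hBC b c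
  have hzero : ∑ a, ∑ b, ∑ c, (t a b c - q a b c) = 0 := by
    simp only [Finset.sum_sub_distrib]
    rw [hsumq, sub_self]
  rw [key, ← hzero]
  refine Finset.sum_le_sum fun a _ => Finset.sum_le_sum fun b _ =>
    Finset.sum_le_sum fun c _ => hterm a b c

end aux

theorem stmt_16 {Ω α β γ ζ δ : Type*} [Fintype Ω] [Fintype α] [DecidableEq α]
    [Fintype β] [DecidableEq β] [Fintype γ] [DecidableEq γ] [Fintype ζ] [DecidableEq ζ]
    [Fintype δ] [DecidableEq δ]
    (p : Ω → ℝ) (hp : ∀ ω, 0 ≤ p ω) (hsum : ∑ ω, p ω = 1)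
    (X : Ω → α) (Y : Ω → β) (N : Ω → γ) (Z' : Ω → ζ)
    (hYX : condEnt p Y X = 0)
    (hYN : mi p Y N = 0)
    (hXdet : condEnt p X (fun ω => (Y ω, N ω)) = 0)
    (hsuff : mi p Z' Y = mi p X Y)
    (hinv : mi p Z' N = 0)
    (hMarkov : cmi p (fun ω => (Y ω, N ω)) Z' X = 0) :
    ∀ Zt : Ω → δ, mi p Zt Y = mi p X Y →
      cmi p (fun ω => (Y ω, N ω)) Zt X = 0 →
      mi p Z' X ≤ mi p Zt X := by
  intro Zt hsufft hMarkovt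
  -- H(Y) = I(X;Y) since H(Y|X) = 0
  have hentY : ent p Y = mi p X Y := by
    have h := ent_swap' p Y X
    simp only [mi, condEnt] at hYX ⊢
    linarith
  -- Upper bound : mi p Z' X ≤ mi p X Y
  have hZYN : cmi p Z' (fun ω => (Y ω, N ω)) X = 0 := by
    rw [cmi_symm']; exact hMarkov
  have hstep1 : mi p Z' X = mi p Z' (fun ω => (Y ω, N ω)) := by
    have c1 := mi_chain' p Z' (fun ω => (Y ω, N ω)) X
    have c2 := mi_chain' p Z' X (fun ω => (Y ω, N ω))
    have c3 := mi_swap_right' p Z' (fun ω => (Y ω, N ω)) X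
    have c4 : cmi p Z' X (fun ω => (Y ω, N ω)) = 0 := by
      have h5 := cmi_symm' p Z' X (fun ω => (Y ω, N ω))
      have h6 := cmi_le_condEnt' p hp X Z' (fun ω => (Y ω, N ω))
      have h7 := cmi_nonneg' p hp X Z' (fun ω => (Y ω, N ω))
      rw [h5]; linarith
    linarith
  have hstep2 : mi p Z' (fun ω => (Y ω, N ω)) = cmi p Z' Y N := by
    have c1 := mi_chain' p Z' Y N
    linarith
  have hcond : cmi p Z' Y N ≤ ent p Y := by
    have h1 := cmi_symm' p Z' Y N
    have h2 := cmi_le_condEnt' p hp Y Z' N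
    have h3 : condEnt p Y N = ent p Y := by
      simp only [mi, condEnt] at hYN ⊢
      linarith
    linarith
  have hupper : mi p Z' X ≤ mi p X Y := by
    rw [hstep1, hstep2, ← hentY]; exact hcond
  -- Lower bound : mi p X Y ≤ mi p Zt X
  have g1 : cmi p Zt Y X = 0 := by
    have h1 := cmi_symm' p Zt Y X
    have h2 := cmi_le_condEnt' p hp Y Zt X
    have h3 := cmi_nonneg' p hp Y Zt X
    rw [h1]; linarith
  have g2 := mi_chain' p Zt Y X
  have g3 := mi_chain' p Zt X Y
  have g4 := mi_swap_right' p Zt Y X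
  have g5 := cmi_nonneg' p hp Zt X Y
  linarith
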